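/- Let f be given by an admissible representation f(z) = (−2π/(a·log z))·(1 + Σ_{n≥1} Φ_n(z)/(log z)^n), and for x < 0 write f(x) = u(x) + i·v(x) (boundary values from the upper half-plane, log x = log|x| + iπ). Then v(x) = (a/2)·u(x)² + o(u(x)²) as x → 0⁻; that is, the curve Γ = { f(x) : x ∈ (−ε, 0) } has first-order tangency to the real axis at the origin with curvature a at 0. -/

import Mathlib

open Complex Filter Topology

/-- `Phi c n z = Σ_{k≥0} c_{n,k} z^k`. -/
noncomputable def Phi (c : ℕ → ℕ → ℝ) (n : ℕ) (z : ℂ) : ℂ :=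
  ∑' k : ℕ, (c n k : ℂ) * z ^ k

/-- Termwise derivative `Σ_{k≥1} k·c_{n,k} z^{k-1}`. -/
noncomputable def PhiD (c : ℕ → ℕ → ℝ) (n : ℕ) (z : ℂ) : ℂ :=
  ∑' k : ℕ, ((k + 1 : ℕ) : ℂ) * (c n (k + 1) : ℂ) * z ^ k

/-- `f(z) = (−2π/(a·log z))·(1 + Σ_{n≥1} Φ_n(z)/(log z)^n)`, where `Complex.log`
is the branch with `log i = iπ/2`, continuous on the closed upper half-plane minus `0`. -/
noncomputable def fRep (a : ℝ) (c : ℕ → ℕ → ℝ) (z : ℂ) : ℂ :=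
  (-(2 * (Real.pi : ℂ)) / ((a : ℂ) * Complex.log z)) *
    (1 + ∑' n : ℕ, Phi c (n + 1) z / (Complex.log z) ^ (n + 1))

/-- Admissibility of the representation `fRep a c`. -/
def Admissible (a : ℝ) (c : ℕ → ℕ → ℝ) : Prop :=
  0 < a ∧
  (∃ B : ℝ, ∀ n : ℕ, 1 ≤ n → ∀ k : ℕ, 1 ≤ k → |c n k| ^ ((1 : ℝ) / (k : ℝ)) ≤ B) ∧
  (∃ r > (0 : ℝ), ∃ M > (0 : ℝ), ∀ n : ℕ, 1 ≤ n → ∀ z : ℂ,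
      ‖z‖ ≤ r → 0 ≤ z.im → ‖Phi c n z‖ ≤ M ^ n) ∧
  (∃ r > (0 : ℝ), ∃ M > (0 : ℝ), ∀ n : ℕ, 1 ≤ n → ∀ z : ℂ,
      ‖z‖ ≤ r → 0 ≤ z.im → ‖PhiD c n z‖ ≤ M ^ n) ∧
  c 1 0 ≠ 0

lemma Phi_ofReal (c : ℕ → ℕ → ℝ) (n : ℕ) (x : ℝ) :
    Phi c n (x : ℂ) = ((∑' k : ℕ, c n k * x ^ k : ℝ) : ℂ) := by
  rw [Complex.ofReal_tsum]
  unfold Phi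
  push_cast
  rfl

lemma summable_of_geom {g : ℕ → ℂ} {q C : ℝ} (hq0 : 0 ≤ q) (hq1 : q < 1)
    (h : ∀ n, ‖g n‖ ≤ C * q ^ n) : Summable g :=
  Summable.of_norm_bounded ((summable_geometric_of_lt_one hq0 hq1).mul_left C) h

lemma tsum_norm_le_of_geom {g : ℕ → ℂ} {q C : ℝ} (hq0 : 0 ≤ q) (hq : q ≤ 1/2) (hC : 0 ≤ C)
    (h : ∀ n, ‖g n‖ ≤ C * q ^ n) : ‖∑' n, g n‖ ≤ 2 * C := by
  have hq1 : q < 1 := by linarith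
  have hsg : Summable (fun n : ℕ => C * q ^ n) :=
    (summable_geometric_of_lt_one hq0 hq1).mul_left C
  have h1 := tsum_of_norm_bounded hsg.hasSum h
  have h2 : ∑' n : ℕ, C * q ^ n = C * (1 - q)⁻¹ := by
    rw [tsum_mul_left, tsum_geometric_of_lt_one hq0 hq1]
  have h3 : (1 - q)⁻¹ ≤ 2 := by
    rw [inv_le_comm₀ (by linarith) (by norm_num)]
    linarith
  rw [h2] at h1
  calc ‖∑' n, g n‖ ≤ C * (1 - q)⁻¹ := h1
    _ ≤ C * 2 := by exact mul_le_mul_of_nonneg_left h3 hC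
    _ = 2 * C := by ring

lemma Sbounds (c : ℕ → ℕ → ℝ) (r M : ℝ) (hM : 0 < M)
    (hΦ : ∀ n : ℕ, 1 ≤ n → ∀ z : ℂ,
      ‖z‖ ≤ r → 0 ≤ z.im → ‖Phi c n z‖ ≤ M ^ n)
    (x : ℝ) (hxr : |x| ≤ r) (L : ℂ) (hA : 2 * M ≤ ‖L‖) :
    ‖∑' n : ℕ, Phi c (n+1) (x:ℂ) / L ^ (n+1)‖ ≤ 2 * (M / ‖L‖) ∧
    ‖(∑' n : ℕ, Phi c (n+1) (x:ℂ) / L ^ (n+1)) - Phi c 1 (x:ℂ) / L‖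
      ≤ 2 * (M / ‖L‖) ^ 2 := by
  set A := ‖L‖ with hAdef
  have hA0 : 0 < A := lt_of_lt_of_le (by linarith) hA
  set q := M / A with hqdef
  have hq0 : 0 ≤ q := by positivity
  have hq : q ≤ 1 / 2 := by rw [hqdef, div_le_iff₀ hA0]; linarith
  have hg : ∀ n : ℕ, ‖Phi c (n+1) (x:ℂ) / L ^ (n+1)‖ ≤ q * q ^ n := by
    intro n
    have h1 : ‖Phi c (n+1) (x:ℂ)‖ ≤ M ^ (n+1) :=
      hΦ (n+1) (by omega) _ (by simpa using hxr) (by simp)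
    have : ‖Phi c (n+1) (x:ℂ) / L ^ (n+1)‖ = ‖Phi c (n+1) (x:ℂ)‖ / A ^ (n+1) := by
      rw [norm_div, norm_pow]
    rw [this]
    calc ‖Phi c (n+1) (x:ℂ)‖ / A ^ (n+1) ≤ M ^ (n+1) / A ^ (n+1) := by gcongr
      _ = q ^ (n+1) := by rw [hqdef, div_pow]
      _ = q * q ^ n := by rw [pow_succ]; ring
  have hsum : Summable (fun n : ℕ => Phi c (n+1) (x:ℂ) / L ^ (n+1)) :=
    summable_of_geom hq0 (by linarith) hg
  constructor
  · have := tsum_norm_le_of_geom hq0 hq hq0 hg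
    simpa using this
  · have hshift := Summable.tsum_eq_zero_add hsum
    have hsub : (∑' n : ℕ, Phi c (n+1) (x:ℂ) / L ^ (n+1)) - Phi c 1 (x:ℂ) / L
        = ∑' n : ℕ, Phi c (n+2) (x:ℂ) / L ^ (n+2) := by
      rw [hshift]; simp
    rw [hsub]
    have hg2 : ∀ n : ℕ, ‖Phi c (n+2) (x:ℂ) / L ^ (n+2)‖ ≤ q ^ 2 * q ^ n := by
      intro n
      have := hg (n+1)
      calc ‖Phi c (n+2) (x:ℂ) / L ^ (n+2)‖ ≤ q * q ^ (n+1) := this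
        _ = q ^ 2 * q ^ n := by ring
    have := tsum_norm_le_of_geom hq0 hq (by positivity) hg2
    simpa using this

set_option maxHeartbeats 1000000 in
lemma keybound (a M t p : ℝ) (S : ℂ) (ha : 0 < a) (hM : 0 < M)
    (ht1 : 1 ≤ -t)
    (hp : |p| ≤ M)
    (hS : ‖S‖ ≤ 2 * (M / ‖(t:ℂ) + (Real.pi:ℂ) * I‖))
    (hR : ‖S - (p:ℂ) / ((t:ℂ) + (Real.pi:ℂ) * I)‖
        ≤ 2 * (M / ‖(t:ℂ) + (Real.pi:ℂ) * I‖) ^ 2) :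
    |(-(2*(Real.pi:ℂ)) / ((a:ℂ) * ((t:ℂ) + (Real.pi:ℂ) * I)) * (1 + S)).im
      - a/2 * ((-(2*(Real.pi:ℂ)) / ((a:ℂ) * ((t:ℂ) + (Real.pi:ℂ) * I)) * (1 + S)).re)^2|
      ≤ ((2*Real.pi^4 + 4*Real.pi^2*M + 4*Real.pi*M^2 + 8*Real.pi^2*M + 8*Real.pi^2*M^2)/a)
        / (-t)^3 := by
  have hπ := Real.pi_pos
  set π := Real.pi
  set L : ℂ := (t:ℂ) + (π:ℂ) * I with hLdef
  set A := ‖L‖ with hAdef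
  set τ := -t with hτdef
  have hLre : L.re = t := by simp [hLdef]
  have hLim : L.im = π := by simp [hLdef]
  have hN : Complex.normSq L = t^2 + π^2 := by
    rw [Complex.normSq_apply, hLre, hLim]; ring
  have hA2 : A^2 = t^2 + π^2 := by rw [hAdef, Complex.sq_norm, hN]
  have hτA : τ ≤ A := by
    have h := Complex.abs_re_le_norm L
    rw [hLre] at h
    calc τ = |t| := by rw [abs_of_neg (by linarith : t < 0)]
      _ ≤ A := h
  have hA0 : 0 < A := lt_of_lt_of_le (by linarith) hτA
  have hL0 : L ≠ 0 := by
    intro h; rw [hAdef, h] at hA0; simp at hA0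
  have hN0 : t^2 + π^2 > 0 := by positivity
  have ha' : (a:ℂ) ≠ 0 := by exact_mod_cast ne_of_gt ha
  set w : ℂ := -(2*(π:ℂ)) / ((a:ℂ) * L) with hwdef
  have hw2 : w = ((-2*π/a : ℝ) : ℂ) * L⁻¹ := by
    rw [hwdef]; simp only [div_eq_mul_inv, mul_inv]; push_cast; ring
  have hwre : w.re = -2*π*t/(a*(t^2+π^2)) := by
    rw [hw2]
    simp [Complex.mul_re, Complex.inv_re, Complex.inv_im, hLre, hLim, hN]
    field_simp
  have hwim : w.im = 2*π^2/(a*(t^2+π^2)) := by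
    rw [hw2]
    simp [Complex.mul_im, Complex.inv_re, Complex.inv_im, hLre, hLim, hN]
    field_simp
  have habsw : ‖w‖ = 2*π/(a*A) := by
    rw [hwdef, norm_div, norm_mul]
    rw [show -(2*(π:ℂ)) = ((-(2*π) : ℝ) : ℂ) by push_cast; ring]
    rw [Complex.norm_real, Complex.norm_real, Real.norm_eq_abs, Real.norm_eq_abs, ← hAdef]
    rw [abs_of_neg (by linarith : -(2*π) < 0), abs_of_pos ha]
    ring
  have hcore : w.im - a/2 * w.re^2 = 2*π^4/(a*(t^2+π^2)^2) := by
    rw [hwim, hwre]; field_simp; ring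
  have hτ0 : (0:ℝ) < τ := by linarith
  have hτ3A3 : τ^3 ≤ A^3 := pow_le_pow_left₀ (by linarith) hτA 3
  have hb1 : |w.im - a/2*w.re^2| ≤ 2*π^4/(a*τ^3) := by
    rw [hcore, abs_of_pos (by positivity)]
    have hd : τ^3 ≤ (t^2+π^2)^2 := by nlinarith
    gcongr
  have habsS : ‖S‖ ≤ 2*M/A := by
    calc ‖S‖ ≤ 2*(M/A) := hS
      _ = 2*M/A := by ring
  have habsR : ‖S - (p:ℂ)/L‖ ≤ 2*M^2/A^2 := by
    calc ‖S - (p:ℂ)/L‖ ≤ 2*(M/A)^2 := hR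
      _ = 2*M^2/A^2 := by rw [div_pow]; ring
  have habswS : ‖w*S‖ ≤ (2*π/(a*A)) * (2*M/A) := by
    rw [norm_mul, habsw]
    exact mul_le_mul_of_nonneg_left habsS (by positivity)
  have hwre_le : |w.re| ≤ 2*π/(a*A) := habsw ▸ Complex.abs_re_le_norm w
  have hwSre : |(w*S).re| ≤ (2*π/(a*A)) * (2*M/A) :=
    le_trans (Complex.abs_re_le_norm _) habswS
  have hsplit : w*S = w*(S - (p:ℂ)/L) + ((-2*π*p/a : ℝ):ℂ) * (L^2)⁻¹ := by
    rw [hwdef]; simp only [div_eq_mul_inv, mul_inv, pow_two]; push_cast; ring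
  have hL2im : (L^2).im = 2*t*π := by rw [pow_two, Complex.mul_im, hLre, hLim]; ring
  have hL2normSq : Complex.normSq (L^2) = (t^2+π^2)^2 := by rw [map_pow, hN]
  have him2 : (((-2*π*p/a : ℝ):ℂ) * (L^2)⁻¹).im = (-2*π*p/a) * (-(2*t*π)/(t^2+π^2)^2) := by
    rw [Complex.mul_im, Complex.inv_im, Complex.inv_re, hL2im, hL2normSq]
    simp
  have him2b : |(((-2*π*p/a : ℝ):ℂ) * (L^2)⁻¹).im| ≤ (2*π*M/a) * (2*π*τ/(t^2+π^2)^2) := by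
    rw [him2, abs_mul]
    have h0 : |(-2*π*p)| = 2*π*|p| := by
      rw [abs_mul, abs_mul]
      norm_num [abs_of_pos hπ]
    have e1 : |(-2*π*p/a)| ≤ 2*π*M/a := by
      rw [abs_div, abs_of_pos ha, h0]
      gcongr
    have e2 : |(-(2*t*π)/(t^2+π^2)^2)| = 2*π*τ/(t^2+π^2)^2 := by
      rw [abs_div, abs_of_pos (by positivity : (0:ℝ) < (t^2+π^2)^2)]
      congr 1
      have hp1 : (0:ℝ) < (-t)*π := mul_pos hτ0 hπ
      rw [abs_of_pos (by nlinarith [hp1] : (0:ℝ) < -(2*t*π))]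
      ring
    rw [e2]
    exact mul_le_mul_of_nonneg_right e1 (by positivity)
  have hwSim : |(w*S).im| ≤ (2*π/(a*A)) * (2*M^2/A^2) + (2*π*M/a) * (2*π*τ/(t^2+π^2)^2) := by
    rw [hsplit, Complex.add_im]
    refine le_trans (abs_add_le _ _) (add_le_add ?_ him2b)
    refine le_trans (Complex.abs_im_le_norm _) ?_
    rw [norm_mul, habsw]
    exact mul_le_mul_of_nonneg_left habsR (by positivity)
  have hEdecomp : (w * (1+S)).im - a/2*((w*(1+S)).re)^2
      = (w.im - a/2*w.re^2) + ((w*S).im - a*(w.re*(w*S).re) - a/2*((w*S).re)^2) := by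
    have h1 : w*(1+S) = w + w*S := by ring
    rw [h1, Complex.add_im, Complex.add_re]; ring
  rw [hEdecomp]
  -- bound the remaining pieces
  have hb3 : |a*(w.re*(w*S).re)| ≤ 8*π^2*M/(a*τ^3) := by
    calc |a*(w.re*(w*S).re)| = a*(|w.re| * |(w*S).re|) := by
          rw [abs_mul, abs_mul, abs_of_pos ha]
      _ ≤ a*((2*π/(a*A))*((2*π/(a*A)) * (2*M/A))) := by
          apply mul_le_mul_of_nonneg_left ?_ (le_of_lt ha)
          exact mul_le_mul hwre_le hwSre (abs_nonneg _) (by positivity)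
      _ = 8*π^2*M/(a*A^3) := by field_simp; ring
      _ ≤ 8*π^2*M/(a*τ^3) := by gcongr
  have hb4 : |a/2*((w*S).re)^2| ≤ 8*π^2*M^2/(a*τ^3) := by
    calc |a/2*((w*S).re)^2| = a/2*|(w*S).re|^2 := by
          rw [abs_mul, abs_of_pos (by positivity : (0:ℝ) < a/2), _root_.abs_pow]
      _ ≤ a/2*((2*π/(a*A)) * (2*M/A))^2 := by
          apply mul_le_mul_of_nonneg_left ?_ (by positivity)
          exact pow_le_pow_left₀ (abs_nonneg _) hwSre 2
      _ = 8*π^2*M^2/(a^2*A^4) * a := by field_simp; ring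
      _ = 8*π^2*M^2/(a*A^4) := by field_simp
      _ ≤ 8*π^2*M^2/(a*τ^3) := by
          gcongr
          have h1 : 0 ≤ τ^3*(τ-1) := mul_nonneg (by positivity) (by linarith)
          calc τ^3 ≤ τ^3 * τ := by nlinarith [h1]
            _ = τ^4 := by ring
            _ ≤ A^4 := pow_le_pow_left₀ (by linarith) hτA 4
  have hb2 : |(w*S).im| ≤ 4*π*M^2/(a*τ^3) + 4*π^2*M/(a*τ^3) := by
    refine le_trans hwSim (add_le_add ?_ ?_)
    · calc (2*π/(a*A)) * (2*M^2/A^2) = 4*π*M^2/(a*A^3) := by field_simp; ring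
        _ ≤ 4*π*M^2/(a*τ^3) := by gcongr
    · calc (2*π*M/a) * (2*π*τ/(t^2+π^2)^2) = 4*π^2*M*τ/(a*(t^2+π^2)^2) := by
            field_simp; ring
        _ ≤ 4*π^2*M*τ/(a*τ^4) := by
            gcongr
            calc τ^4 = (t^2)^2 := by rw [hτdef]; ring
              _ ≤ (t^2+π^2)^2 := pow_le_pow_left₀ (sq_nonneg t) (by linarith [sq_nonneg π]) 2
        _ = 4*π^2*M/(a*τ^3) := by
            rw [show τ^4 = τ^3 * τ by ring]
            field_simp
  have htri : |(w.im - a/2*w.re^2) + ((w*S).im - a*(w.re*(w*S).re) - a/2*((w*S).re)^2)|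
      ≤ |w.im - a/2*w.re^2| + |(w*S).im| + |a*(w.re*(w*S).re)| + |a/2*((w*S).re)^2| := by
    calc |(w.im - a/2*w.re^2) + ((w*S).im - a*(w.re*(w*S).re) - a/2*((w*S).re)^2)|
        ≤ |w.im - a/2*w.re^2| + |(w*S).im - a*(w.re*(w*S).re) - a/2*((w*S).re)^2| :=
          abs_add_le _ _
      _ ≤ |w.im - a/2*w.re^2| + (|(w*S).im - a*(w.re*(w*S).re)| + |a/2*((w*S).re)^2|) := by
          gcongr
          exact abs_sub _ _
      _ ≤ |w.im - a/2*w.re^2| + ((|(w*S).im| + |a*(w.re*(w*S).re)|) + |a/2*((w*S).re)^2|) := by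
          gcongr
          exact abs_sub _ _
      _ = _ := by ring
  refine le_trans htri ?_
  have hfin : ((2*π^4 + 4*π^2*M + 4*π*M^2 + 8*π^2*M + 8*π^2*M^2)/a) / τ^3
      = 2*π^4/(a*τ^3) + (4*π*M^2/(a*τ^3) + 4*π^2*M/(a*τ^3)) + 8*π^2*M/(a*τ^3)
        + 8*π^2*M^2/(a*τ^3) := by
    field_simp
    ring
  rw [hfin]
  have := hb1
  have := hb2
  have := hb3
  have := hb4
  linarith

lemma absmul_step (E t C0 : ℝ) (ht : 0 < -t) (hk : |E| ≤ C0/(-t)^3) : |E * t^2| ≤ C0/(-t) := by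
  have h1 : |E * t^2| = |E| * t^2 := by rw [abs_mul, _root_.abs_pow, _root_.sq_abs]
  rw [h1]
  calc |E| * t^2 ≤ (C0/(-t)^3) * t^2 := by gcongr
    _ = C0/(-t) := by
        have htne : t ≠ 0 := by intro h; rw [h] at ht; norm_num at ht
        field_simp

lemma fRep_eq (a : ℝ) (c : ℕ → ℕ → ℝ) (z : ℂ) :
    fRep a c z = (-(2 * (Real.pi : ℂ)) / ((a : ℂ) * Complex.log z)) *
      (1 + ∑' n : ℕ, Phi c (n + 1) z / (Complex.log z) ^ (n + 1)) := rfl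

set_option maxHeartbeats 1000000 in
/-- For an admissible representation, `v(x) = (a/2)·u(x)² + o(u(x)²)` as `x → 0⁻`:
the curve `Γ` has first-order tangency to `ℝ` at `0` with curvature `a`. -/
theorem stmt9 (a : ℝ) (c : ℕ → ℕ → ℝ) (hadm : Admissible a c) :
    (fun x : ℝ => (fRep a c (x : ℂ)).im - (a / 2) * ((fRep a c (x : ℂ)).re) ^ 2)
      =o[nhdsWithin 0 (Set.Iio (0 : ℝ))] (fun x : ℝ => ((fRep a c (x : ℂ)).re) ^ 2) := by
  obtain ⟨ha, -, ⟨r, hr, M, hM, hΦ⟩, -, -⟩ := hadm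
  have hπ := Real.pi_pos
  set l := nhdsWithin (0:ℝ) (Set.Iio 0) with hl
  have hneg : Tendsto (fun x : ℝ => -x) l (nhdsWithin (0:ℝ) (Set.Ioi 0)) := by
    apply tendsto_nhdsWithin_of_tendsto_nhds_of_eventually_within
    · exact (continuous_neg.tendsto' (0:ℝ) 0 (by simp)).mono_left nhdsWithin_le_nhds
    · filter_upwards [eventually_mem_nhdsWithin] with x hx
      simpa using hx
  have ht : Tendsto (fun x : ℝ => Real.log (-x)) l atBot :=
    Real.tendsto_log_nhdsGT_zero.comp hneg
  have hτ : Tendsto (fun x : ℝ => -Real.log (-x)) l atTop := tendsto_neg_atBot_atTop.comp ht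
  set T : ℝ := max (2*M) 1 with hT
  have hev : ∀ᶠ x : ℝ in l,
      x < 0 ∧ |x| ≤ r ∧ Real.log (-x) ≤ -T ∧
        Complex.log (x:ℂ) = ((Real.log (-x) : ℝ) : ℂ) + (Real.pi:ℂ) * I := by
    have h1 : ∀ᶠ x : ℝ in l, x < 0 := by
      filter_upwards [eventually_mem_nhdsWithin] with x hx; exact hx
    have h2 : ∀ᶠ x : ℝ in l, |x| ≤ r := by
      have h2' : ∀ᶠ x : ℝ in 𝓝 (0:ℝ), |x| ≤ r := by
        filter_upwards [Metric.ball_mem_nhds (0:ℝ) hr] with x hx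
        rw [Metric.mem_ball, Real.dist_eq, sub_zero] at hx
        exact le_of_lt hx
      exact h2'.filter_mono nhdsWithin_le_nhds
    have h3 : ∀ᶠ x : ℝ in l, Real.log (-x) ≤ -T := ht.eventually (eventually_le_atBot _)
    filter_upwards [h1, h2, h3] with x hx1 hx2 hx3
    refine ⟨hx1, hx2, hx3, ?_⟩
    simp [Complex.log, Complex.norm_real, Real.norm_eq_abs, Complex.arg_ofReal_of_neg hx1, abs_of_neg hx1]
  have hAbig : ∀ᶠ x : ℝ in l, 2*M ≤ ‖Complex.log (x:ℂ)‖ ∧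
      1 ≤ -Real.log (-x) ∧
      -Real.log (-x) ≤ ‖Complex.log (x:ℂ)‖ := by
    filter_upwards [hev] with x hx
    obtain ⟨hx1, hx2, hx3, hx4⟩ := hx
    have h5 : -Real.log (-x) ≤ ‖Complex.log (x:ℂ)‖ := by
      have h6 := Complex.abs_re_le_norm (Complex.log (x:ℂ))
      have h7 : (Complex.log (x:ℂ)).re = Real.log (-x) := by rw [hx4]; simp
      rw [h7] at h6
      exact le_trans (neg_le_abs _) h6
    have h8 : 1 ≤ -Real.log (-x) := by
      have := le_max_right (2*M) 1
      rw [← hT] at this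
      linarith
    refine ⟨?_, h8, h5⟩
    have := le_max_left (2*M) 1
    rw [← hT] at this
    linarith
  have hSb : ∀ᶠ x : ℝ in l,
      ‖∑' n : ℕ, Phi c (n+1) (x:ℂ) / (Complex.log (x:ℂ)) ^ (n+1)‖
        ≤ 2*(M/‖Complex.log (x:ℂ)‖) ∧
      ‖(∑' n : ℕ, Phi c (n+1) (x:ℂ) / (Complex.log (x:ℂ)) ^ (n+1))
          - Phi c 1 (x:ℂ)/Complex.log (x:ℂ)‖
        ≤ 2*(M/‖Complex.log (x:ℂ)‖)^2 := by
    filter_upwards [hev, hAbig] with x hx hA2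
    exact Sbounds c r M hM hΦ x hx.2.1 _ hA2.1
  have hAtop : Tendsto (fun x : ℝ => ‖Complex.log (x:ℂ)‖) l atTop :=
    tendsto_atTop_mono' l (hAbig.mono fun x hx => hx.2.2) hτ
  have hS0 : Tendsto (fun x : ℝ => ∑' n : ℕ, Phi c (n+1) (x:ℂ) / (Complex.log (x:ℂ)) ^ (n+1))
      l (𝓝 0) := by
    have hg : Tendsto (fun x : ℝ => 2*(M/‖Complex.log (x:ℂ)‖)) l (𝓝 0) := by
      have h := (tendsto_const_nhds (x := M)).div_atTop hAtop
      have h2 := h.const_mul (2:ℝ)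
      simpa using h2
    apply squeeze_zero_norm' ?_ hg
    filter_upwards [hSb] with x hx
    simpa using hx.1
  have htdivL : Tendsto (fun x : ℝ => ((Real.log (-x) : ℝ):ℂ) / Complex.log (x:ℂ)) l (𝓝 1) := by
    have hsub : Tendsto (fun x : ℝ => ((Real.log (-x) : ℝ):ℂ) / Complex.log (x:ℂ) - 1) l (𝓝 0) := by
      have hg : Tendsto (fun x : ℝ => Real.pi / ‖Complex.log (x:ℂ)‖) l (𝓝 0) :=
        (tendsto_const_nhds (x := Real.pi)).div_atTop hAtop
      apply squeeze_zero_norm' ?_ hg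
      filter_upwards [hev, hAbig] with x hx hA2
      have hL0 : Complex.log (x:ℂ) ≠ 0 := by
        intro h
        rw [h] at hA2
        simp at hA2
        linarith [hA2.2.1, hA2.2.2]
      rw [div_sub_one hL0]
      have h9 : ((Real.log (-x) : ℝ):ℂ) - Complex.log (x:ℂ) = -((Real.pi:ℂ) * I) := by
        rw [hx.2.2.2]; ring
      rw [h9, norm_div]
      simp [Complex.norm_real, abs_of_pos hπ]
    have := hsub.add (tendsto_const_nhds (x := (1:ℂ)))
    simpa using this
  have hft : Tendsto (fun x : ℝ => fRep a c (x:ℂ) * ((Real.log (-x) : ℝ):ℂ)) l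
      (𝓝 (((-2*Real.pi/a : ℝ)):ℂ)) := by
    have heq : ∀ x : ℝ, fRep a c (x:ℂ) * ((Real.log (-x) : ℝ):ℂ)
        = ((-2*Real.pi/a : ℝ):ℂ) * (((Real.log (-x) : ℝ):ℂ)/Complex.log (x:ℂ))
          * (1 + ∑' n : ℕ, Phi c (n+1) (x:ℂ) / (Complex.log (x:ℂ)) ^ (n+1)) := by
      intro x
      rw [fRep_eq]
      push_cast
      simp only [div_eq_mul_inv, mul_inv]
      ring
    have h := (((tendsto_const_nhds (x := ((-2*Real.pi/a : ℝ):ℂ))).mul htdivL).mul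
      ((tendsto_const_nhds (x := (1:ℂ))).add hS0))
    have h3 := Tendsto.congr (fun x => (heq x).symm) h
    simpa using h3
  have hurt : Tendsto (fun x : ℝ => (fRep a c (x:ℂ)).re * Real.log (-x)) l (𝓝 (-2*Real.pi/a)) := by
    have h := (Complex.continuous_re.tendsto _).comp hft
    have h2 : Tendsto (fun x : ℝ => (fRep a c (x:ℂ) * ((Real.log (-x) : ℝ):ℂ)).re) l
        (𝓝 ((((-2*Real.pi/a : ℝ)):ℂ).re)) := h
    simpa [Complex.mul_re] using h2
  set C0 : ℝ := (2*Real.pi^4 + 4*Real.pi^2*M + 4*Real.pi*M^2 + 8*Real.pi^2*M + 8*Real.pi^2*M^2)/a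
    with hC0
  have T1 : Tendsto (fun x : ℝ =>
      ((fRep a c (x:ℂ)).im - a/2*((fRep a c (x:ℂ)).re)^2) * (Real.log (-x))^2) l (𝓝 0) := by
    have hg : Tendsto (fun x : ℝ => C0 / (-Real.log (-x))) l (𝓝 0) :=
      (tendsto_const_nhds (x := C0)).div_atTop hτ
    apply squeeze_zero_norm' ?_ hg
    filter_upwards [hev, hAbig, hSb] with x hx hA2 hSx
    obtain ⟨hx1, hx2, hx3, hx4⟩ := hx
    have hp : |∑' k : ℕ, c 1 k * x^k| ≤ M := by
      have h1 : ‖Phi c 1 (x:ℂ)‖ ≤ M^1 :=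
        hΦ 1 le_rfl (x:ℂ) (by simpa using hx2) (by simp)
      rw [Phi_ofReal, Complex.norm_real, Real.norm_eq_abs] at h1
      simpa using h1
    rw [hx4, Phi_ofReal] at hSx
    have hk := keybound a M (Real.log (-x)) (∑' k : ℕ, c 1 k * x^k)
      (∑' n : ℕ, Phi c (n+1) (x:ℂ) / (((Real.log (-x) : ℝ):ℂ) + (Real.pi:ℂ) * I) ^ (n+1))
      ha hM hA2.2.1 hp hSx.1 hSx.2
    rw [Real.norm_eq_abs, fRep_eq, hx4, hC0]
    have htne : (0:ℝ) < -Real.log (-x) := by linarith [hA2.2.1]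
    exact absmul_step _ _ _ htne hk
  have hT2sq : Tendsto (fun x : ℝ => ((fRep a c (x:ℂ)).re * Real.log (-x))^2) l
      (𝓝 ((-2*Real.pi/a)^2)) := hurt.pow 2
  have hlim_ne : ((-2*Real.pi/a)^2 : ℝ) ≠ 0 := by positivity
  have hden : ∀ᶠ x : ℝ in l, (fRep a c (x:ℂ)).re ≠ 0 := by
    have h := hurt.eventually_lt_const (show -2*Real.pi/a < 0 by
      apply div_neg_of_neg_of_pos (by linarith) ha)
    filter_upwards [h] with x hx hc
    rw [hc] at hx
    simp at hx
  rw [Asymptotics.isLittleO_iff_tendsto']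
  · have hdiv := T1.div hT2sq hlim_ne
    rw [zero_div] at hdiv
    apply hdiv.congr'
    filter_upwards [hev, hAbig, hden] with x hx hA2 hd
    have htne : Real.log (-x) ≠ 0 := by
      have := hA2.2.1; intro h; rw [h] at this; norm_num at this
    have h1 : ((fRep a c (x:ℂ)).re * Real.log (-x))^2
        = ((fRep a c (x:ℂ)).re)^2 * (Real.log (-x))^2 := by ring
    simp only [Pi.div_apply]
    rw [h1, mul_div_mul_right _ _ (pow_ne_zero 2 htne)]
  · filter_upwards [hden] with x hd h
    exact absurd ((pow_eq_zero_iff (by norm_num : (2:ℕ) ≠ 0)).mp h) hd
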